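/- There exists an absolute constant C > 0 such that the following holds. Let α, ρ > 0, δ ∈ (0,1), and n ≥ d + log(1/δ). Let η_1, …, η_n be i.i.d. copies of an (α,ρ)-semi-product random vector in ℝ^d, and let f = f_{2ρ} be the gradient of the entry-wise Huber loss with parameter 2ρ. Then with probability at least 1−δ, the operator norm of the matrix (1/n)·Σ_{i=1}^n f(η_i)·f(η_i)^⊤ is at most C·ρ². -/

import Mathlib

open MeasureTheory ProbabilityTheory Real
open scoped BigOperators ENNReal NNReal Classical

noncomputable section

/-- The clipping map `φ_h`: identity on `[-h, h]`, `h · sign t` outside. -/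
def clip (h t : ℝ) : ℝ := if |t| ≤ h then t else h * Real.sign t

/-- The Huber penalty `Φ_h`. -/
def huber (h t : ℝ) : ℝ := if |t| ≤ h then t ^ 2 / 2 else h * |t| - h ^ 2 / 2

/-- Entry-wise Huber loss `F_h`. -/
def huberLoss {d : ℕ} (h : ℝ) (x : EuclideanSpace ℝ (Fin d)) : ℝ :=
  ∑ j, huber h (x j)

/-- Gradient of the entry-wise Huber loss: coordinatewise clipping `f_h`. -/
def clipVec {d : ℕ} (h : ℝ) (x : EuclideanSpace ℝ (Fin d)) : EuclideanSpace ℝ (Fin d) :=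
  WithLp.toLp 2 (fun j => clip h (x j))

/-- Euclidean projection onto the ball of radius `h` centered at `0`. -/
def ballProj {d : ℕ} (h : ℝ) (x : EuclideanSpace ℝ (Fin d)) : EuclideanSpace ℝ (Fin d) :=
  if ‖x‖ ≤ h then x else (h / ‖x‖) • x

/-- `y` is an `ε`-corruption of `ystar`: they differ in at most `ε·n` positions. -/
def IsCorruption {E : Type*} {n : ℕ} (ε : ℝ) (ystar y : Fin n → E) : Prop :=
  ({i : Fin n | y i ≠ ystar i}.ncard : ℝ) ≤ ε * n

/-- The weight set `W_ε`. -/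
def weightSet (n : ℕ) (ε : ℝ) : Set (Fin n → ℝ) :=
  {w | (∀ i, 0 ≤ w i ∧ w i ≤ 1 / n) ∧ ∑ i, |w i - 1 / n| ≤ ε}

/-- The weighted loss `L^w(μ) = Σ_i w_i F(μ - y_i)`. -/
def wLoss {d n : ℕ} (F : EuclideanSpace ℝ (Fin d) → ℝ) (y : Fin n → EuclideanSpace ℝ (Fin d))
    (w : Fin n → ℝ) (μ : EuclideanSpace ℝ (Fin d)) : ℝ :=
  ∑ i, w i * F (μ - y i)

/-- An (α,ρ)-semi-product random vector. -/
structure IsSemiProduct {Ω : Type*} [MeasurableSpace Ω] (P : Measure Ω) {d : ℕ} (α ρ : ℝ)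
    (η : Ω → EuclideanSpace ℝ (Fin d)) : Prop where
  meas : Measurable η
  symm : ∀ j : Fin d, IdentDistrib (fun ω => η ω j) (fun ω => -(η ω j)) P P
  mass : ∀ j : Fin d, ENNReal.ofReal α ≤ P {ω | |η ω j| ≤ ρ}
  indep_sign_abs :
    IndepFun (fun ω => fun j : Fin d => Real.sign (η ω j))
      (fun ω => fun j : Fin d => |η ω j|) P
  iIndep_sign :
    iIndepFun (fun j ω => Real.sign (η ω j)) P

/-- i.i.d. copies of an (α,ρ)-semi-product random vector. -/
def IsIIDSemiProduct {Ω : Type*} [MeasurableSpace Ω] (P : Measure Ω) {d n : ℕ} (α ρ : ℝ)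
    (η : Fin n → Ω → EuclideanSpace ℝ (Fin d)) : Prop :=
  iIndepFun η P ∧
    (∀ i, IsSemiProduct P α ρ (η i)) ∧
    ∀ i j, IdentDistrib (η i) (η j) P P

/-- Outer product `x xᵀ` as a matrix. -/
def outerProd {d : ℕ} (x : EuclideanSpace ℝ (Fin d)) : Matrix (Fin d) (Fin d) ℝ :=
  Matrix.of fun i j => x i * x j

/-- Operator (spectral) norm of a matrix, acting on Euclidean space. -/
def matOpNorm {d : ℕ} (M : Matrix (Fin d) (Fin d) ℝ) : ℝ :=
  ‖LinearMap.toContinuousLinearMap (Matrix.toEuclideanLin M)‖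

/-- Frobenius norm of a matrix. -/
def frobNorm {d : ℕ} (M : Matrix (Fin d) (Fin d) ℝ) : ℝ :=
  Real.sqrt (∑ i, ∑ j, (M i j) ^ 2)

/-- Effective rank `r(Σ) = Tr(Σ)/‖Σ‖`. -/
def effRank {d : ℕ} (M : Matrix (Fin d) (Fin d) ℝ) : ℝ :=
  M.trace / matOpNorm M

/-- Quadratic form `vᵀ M v`. -/
def quadForm {d : ℕ} (M : Matrix (Fin d) (Fin d) ℝ) (v : EuclideanSpace ℝ (Fin d)) : ℝ :=
  ∑ i, ∑ j, v i * M i j * v j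

/-- The uniform (rotation-invariant) probability distribution on the unit sphere of `ℝ^d`. -/
def IsUniformOnSphere {d : ℕ} (μ : Measure (EuclideanSpace ℝ (Fin d))) : Prop :=
  IsProbabilityMeasure μ ∧ μ (Metric.sphere (0 : EuclideanSpace ℝ (Fin d)) 1) = 1 ∧
    ∀ O : EuclideanSpace ℝ (Fin d) ≃ₗᵢ[ℝ] EuclideanSpace ℝ (Fin d), μ.map O = μ

/-- `max_{‖v‖=1} (Σ_i w_i ⟨g i, v⟩^{2k})^{1/(2k)}`. -/
def momSup {d n : ℕ} (k : ℕ) (g : Fin n → EuclideanSpace ℝ (Fin d)) (w : Fin n → ℝ) : ℝ :=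
  sSup {x : ℝ | ∃ v : EuclideanSpace ℝ (Fin d), ‖v‖ = 1 ∧
    x = (∑ i, w i * (inner ℝ (g i) v : ℝ) ^ (2 * k)) ^ ((1 : ℝ) / (2 * k))}

/-- The random vector `R · Σ^{1/2} · U`. -/
def ellSample {Ω : Type*} {d : ℕ} (Ssqrt : Matrix (Fin d) (Fin d) ℝ) (R : Ω → ℝ)
    (U : Ω → EuclideanSpace ℝ (Fin d)) : Ω → EuclideanSpace ℝ (Fin d) :=
  fun ω => R ω • Matrix.toEuclideanLin Ssqrt (U ω)


open Metric in
lemma exists_net (m : ℕ) : ∃ N : Finset (EuclideanSpace ℝ (Fin m)),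
    (∀ y ∈ N, ‖y‖ = 1) ∧
    (∀ x : EuclideanSpace ℝ (Fin m), ‖x‖ = 1 → ∃ y ∈ N, ‖x - y‖ ≤ 1/4) ∧
    (N.card : ℝ) ≤ 9 ^ m := by
  classical
  set E := EuclideanSpace ℝ (Fin m)
  set Pk : Set (Finset E) :=
    {F | (∀ x ∈ F, ‖x‖ = (1:ℝ)) ∧ ∀ x ∈ F, ∀ y ∈ F, x ≠ y → 1/4 < ‖x - y‖} with hPk
  have hcard : ∀ F ∈ Pk, (F.card : ℝ) ≤ 9 ^ m := by
    intro F hF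
    rcases Nat.eq_zero_or_pos m with hm | hm
    · subst hm
      have : F ⊆ {0} := by
        intro x hx
        simp [Subsingleton.elim x 0]
      calc (F.card : ℝ) ≤ ({0} : Finset E).card := by
            exact_mod_cast Finset.card_le_card this
        _ ≤ 9 ^ 0 := by norm_num
    · -- volume packing argument
      have hdisj : (↑F : Set E).PairwiseDisjoint (fun x => ball x (1/8)) := by
        intro x hx y hy hxy
        apply ball_disjoint_ball
        have := hF.2 x hx y hy hxy
        rw [dist_eq_norm]
        linarith
      have hsub : (⋃ x ∈ F, ball x (1/8)) ⊆ ball (0 : E) (9/8) := by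
        intro z hz
        simp only [Set.mem_iUnion] at hz
        obtain ⟨x, hx, hzx⟩ := hz
        have h1 : ‖x‖ = 1 := hF.1 x hx
        have := mem_ball.1 hzx
        rw [mem_ball, dist_zero_right]
        calc ‖z‖ ≤ ‖z - x‖ + ‖x‖ := by
              calc ‖z‖ = ‖(z - x) + x‖ := by rw [sub_add_cancel]
                _ ≤ ‖z - x‖ + ‖x‖ := norm_add_le _ _
          _ < 1/8 + 1 := by
              rw [← dist_eq_norm] at *; linarith [this]
          _ ≤ 9/8 := by norm_num
      have hvol : ∀ x : E, ∀ r : ℝ, 0 ≤ r →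
          volume (ball x r) = ENNReal.ofReal (r ^ m) * volume (ball (0 : E) 1) := by
        haveI : Nonempty (Fin m) := ⟨⟨0, hm⟩⟩
        intro x r hr
        rw [Measure.addHaar_ball _ _ hr, finrank_euclideanSpace_fin]
      have hsum : volume (⋃ x ∈ F, ball x (1/8)) =
          (F.card : ℝ≥0∞) * (ENNReal.ofReal ((1/8:ℝ) ^ m) * volume (ball (0 : E) 1)) := by
        rw [measure_biUnion_finset hdisj (fun x _ => measurableSet_ball)]
        rw [Finset.sum_congr rfl (fun x _ => hvol x (1/8) (by norm_num))]
        rw [Finset.sum_const, nsmul_eq_mul]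
      have hle : (F.card : ℝ≥0∞) * (ENNReal.ofReal ((1/8:ℝ) ^ m) * volume (ball (0 : E) 1)) ≤
          ENNReal.ofReal ((9/8:ℝ) ^ m) * volume (ball (0 : E) 1) := by
        rw [← hsum, ← hvol 0 (9/8) (by norm_num)]
        exact measure_mono hsub
      rw [← mul_assoc] at hle
      have hv0 : volume (ball (0 : E) 1) ≠ 0 := (measure_ball_pos _ _ one_pos).ne'
      have hvt : volume (ball (0 : E) 1) ≠ ⊤ := measure_ball_lt_top.ne
      rw [ENNReal.mul_le_mul_iff_left hv0 hvt] at hle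
      have hle2 : ENNReal.ofReal ((F.card : ℝ) * (1/8:ℝ)^m) ≤ ENNReal.ofReal ((9/8:ℝ)^m) := by
        rw [ENNReal.ofReal_mul (Nat.cast_nonneg _), ENNReal.ofReal_natCast]
        exact hle
      have hle3 : (F.card : ℝ) * (1/8:ℝ)^m ≤ (9/8:ℝ)^m :=
        (ENNReal.ofReal_le_ofReal_iff (by positivity)).1 hle2
      have h98 : (9/8:ℝ)^m = 9^m * (1/8:ℝ)^m := by
        rw [← mul_pow]; norm_num
      rw [h98] at hle3
      have := le_of_mul_le_mul_right hle3 (pow_pos (by norm_num : (0:ℝ) < 1/8) m)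
      exact this
  -- pick a maximal-cardinality element of Pk
  set s : Set ℕ := Finset.card '' Pk with hs
  have hsne : s.Nonempty := ⟨0, ⟨∅, by simp [hPk], rfl⟩⟩
  have hsbdd : BddAbove s := by
    refine ⟨9 ^ m, ?_⟩
    rintro k ⟨F, hF, rfl⟩
    have h := hcard F hF
    have h9 : ((9:ℝ))^m = ((9^m : ℕ) : ℝ) := by push_cast; ring
    rw [h9] at h
    exact_mod_cast h
  obtain ⟨F₀, hF₀, hFcard⟩ : ∃ F ∈ Pk, F.card = sSup s := Nat.sSup_mem hsne hsbdd
  refine ⟨F₀, hF₀.1, ?_, hcard F₀ hF₀⟩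
  intro x hx
  by_contra hcon
  push_neg at hcon
  have hxF : x ∉ F₀ := by
    intro hmem
    have h0 := hcon x hmem
    simp only [sub_self, norm_zero] at h0
    linarith
  have hF' : insert x F₀ ∈ Pk := by
    constructor
    · intro y hy
      rcases Finset.mem_insert.1 hy with rfl | hy
      · exact hx
      · exact hF₀.1 y hy
    · intro a ha b hb hab
      rcases Finset.mem_insert.1 ha with ha' | ha'
      · rcases Finset.mem_insert.1 hb with hb' | hb'
        · exact absurd (ha'.trans hb'.symm) hab
        · rw [ha']; exact hcon b hb'
      · rcases Finset.mem_insert.1 hb with hb' | hb'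
        · rw [hb', norm_sub_rev]; exact hcon a ha'
        · exact hF₀.2 a ha' b hb' hab
  have : (insert x F₀).card ≤ sSup s := le_csSup hsbdd ⟨_, hF', rfl⟩
  rw [Finset.card_insert_of_notMem hxF, hFcard] at this
  omega

def bil {n d : ℕ} (g : Fin n → Fin d → ℝ) (u : EuclideanSpace ℝ (Fin n))
    (v : EuclideanSpace ℝ (Fin d)) : ℝ :=
  ∑ i, ∑ j, u i * g i j * v j

lemma bil_neg_right {n d : ℕ} (g : Fin n → Fin d → ℝ) (u v) :
    bil g u (-v) = -bil g u v := by
  simp only [bil, ← Finset.sum_neg_distrib]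
  refine Finset.sum_congr rfl fun i _ => ?_
  refine Finset.sum_congr rfl fun j _ => ?_
  have : (-v : EuclideanSpace ℝ (Fin d)) j = -(v j) := rfl
  rw [this]; ring

lemma bil_sub_left {n d : ℕ} (g : Fin n → Fin d → ℝ) (u u' v) :
    bil g (u - u') v = bil g u v - bil g u' v := by
  simp only [bil, ← Finset.sum_sub_distrib]
  refine Finset.sum_congr rfl fun i _ => Finset.sum_congr rfl fun j _ => ?_
  have : (u - u' : EuclideanSpace ℝ (Fin n)) i = u i - u' i := rfl
  rw [this]; ring

lemma bil_sub_right {n d : ℕ} (g : Fin n → Fin d → ℝ) (u v v') :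
    bil g u (v - v') = bil g u v - bil g u v' := by
  simp only [bil, ← Finset.sum_sub_distrib]
  refine Finset.sum_congr rfl fun i _ => Finset.sum_congr rfl fun j _ => ?_
  have : (v - v' : EuclideanSpace ℝ (Fin d)) j = v j - v' j := rfl
  rw [this]; ring

lemma bil_smul {n d : ℕ} (g : Fin n → Fin d → ℝ) (a b : ℝ) (u v) :
    bil g (a • u) (b • v) = a * b * bil g u v := by
  simp only [bil, Finset.mul_sum]
  refine Finset.sum_congr rfl fun i _ => Finset.sum_congr rfl fun j _ => ?_
  have h1 : (a • u : EuclideanSpace ℝ (Fin n)) i = a * u i := rfl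
  have h2 : (b • v : EuclideanSpace ℝ (Fin d)) j = b * v j := rfl
  rw [h1, h2]; ring

lemma bil_continuous {n d : ℕ} (g : Fin n → Fin d → ℝ) :
    Continuous (fun p : EuclideanSpace ℝ (Fin n) × EuclideanSpace ℝ (Fin d) =>
      bil g p.1 p.2) := by
  unfold bil
  refine continuous_finset_sum _ fun i _ => continuous_finset_sum _ fun j _ => ?_
  have h1 : Continuous (fun p : EuclideanSpace ℝ (Fin n) × EuclideanSpace ℝ (Fin d) => p.1 i) :=
    (EuclideanSpace.proj i).continuous.comp continuous_fst
  have h2 : Continuous (fun p : EuclideanSpace ℝ (Fin n) × EuclideanSpace ℝ (Fin d) => p.2 j) :=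
    (EuclideanSpace.proj j).continuous.comp continuous_snd
  exact (h1.mul continuous_const).mul h2

lemma bil_net_bound {n d : ℕ} (hn : 0 < n) (hd : 0 < d) (g : Fin n → Fin d → ℝ)
    (Nu : Finset (EuclideanSpace ℝ (Fin n))) (Nv : Finset (EuclideanSpace ℝ (Fin d)))
    (hNu1 : ∀ y ∈ Nu, ‖y‖ = 1)
    (hNucov : ∀ x : EuclideanSpace ℝ (Fin n), ‖x‖ = 1 → ∃ y ∈ Nu, ‖x - y‖ ≤ 1/4)
    (hNv1 : ∀ y ∈ Nv, ‖y‖ = 1)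
    (hNvcov : ∀ x : EuclideanSpace ℝ (Fin d), ‖x‖ = 1 → ∃ y ∈ Nv, ‖x - y‖ ≤ 1/4)
    {B : ℝ} (hB : ∀ u ∈ Nu, ∀ v ∈ Nv, bil g u v ≤ B) :
    ∀ u v, ‖u‖ = 1 → ‖v‖ = 1 → bil g u v ≤ 2 * B := by
  classical
  set S : Set (EuclideanSpace ℝ (Fin n) × EuclideanSpace ℝ (Fin d)) :=
    (Metric.sphere 0 1) ×ˢ (Metric.sphere 0 1) with hS
  have hcomp : IsCompact S := (isCompact_sphere _ _).prod (isCompact_sphere _ _)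
  have hne : S.Nonempty := by
    refine ⟨⟨EuclideanSpace.single ⟨0, hn⟩ (1:ℝ), EuclideanSpace.single ⟨0, hd⟩ (1:ℝ)⟩, ?_, ?_⟩
    · simp [EuclideanSpace.norm_single]
    · simp [EuclideanSpace.norm_single]
  obtain ⟨⟨us, vs⟩, hmemS, hmax0⟩ :=
    hcomp.exists_isMaxOn hne (bil_continuous g).continuousOn
  have hmax : ∀ p ∈ S, bil g p.1 p.2 ≤ bil g us vs := fun p hp => hmax0 hp
  have hus : ‖us‖ = 1 := by
    have := hmemS.1; rwa [mem_sphere_zero_iff_norm] at this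
  have hvs : ‖vs‖ = 1 := by
    have := hmemS.2; rwa [mem_sphere_zero_iff_norm] at this
  set K := bil g us vs with hK
  have hmax' : ∀ u v, ‖u‖ = 1 → ‖v‖ = 1 → bil g u v ≤ K := by
    intro u v hu hv
    exact hmax ⟨u, v⟩ ⟨mem_sphere_zero_iff_norm.2 hu, mem_sphere_zero_iff_norm.2 hv⟩
  have hK0 : 0 ≤ K := by
    have h1 := hmax' us (-vs) hus (by rw [norm_neg]; exact hvs)
    rw [bil_neg_right] at h1
    linarith
  have habs : ∀ u v, ‖u‖ = 1 → ‖v‖ = 1 → |bil g u v| ≤ K := by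
    intro u v hu hv
    rw [abs_le]
    refine ⟨?_, hmax' u v hu hv⟩
    have h1 := hmax' u (-v) hu (by rw [norm_neg]; exact hv)
    rw [bil_neg_right] at h1
    linarith
  -- bilinear bound for general vectors
  have hgen : ∀ u v, |bil g u v| ≤ K * (‖u‖ * ‖v‖) := by
    intro u v
    rcases eq_or_ne u 0 with rfl | hu0
    · have : bil g (0 : EuclideanSpace ℝ (Fin n)) v = 0 := by
        have h := bil_smul g 0 1 0 v
        simpa using h
      simp [this]
    rcases eq_or_ne v 0 with rfl | hv0
    · have : bil g u (0 : EuclideanSpace ℝ (Fin d)) = 0 := by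
        have h := bil_smul g 1 0 u 0
        simpa using h
      simp [this]
    have hun : ‖u‖ ≠ 0 := norm_ne_zero_iff.2 hu0
    have hvn : ‖v‖ ≠ 0 := norm_ne_zero_iff.2 hv0
    have hdec : bil g u v = (‖u‖ * ‖v‖) * bil g (‖u‖⁻¹ • u) (‖v‖⁻¹ • v) := by
      rw [bil_smul]
      field_simp
    rw [hdec, abs_mul]
    have h1 : |bil g (‖u‖⁻¹ • u) (‖v‖⁻¹ • v)| ≤ K :=
      habs _ _ (norm_smul_inv_norm hu0) (norm_smul_inv_norm hv0)
    have h2 : |‖u‖ * ‖v‖| = ‖u‖ * ‖v‖ := abs_of_nonneg (by positivity)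
    rw [h2]
    calc ‖u‖ * ‖v‖ * |bil g (‖u‖⁻¹ • u) (‖v‖⁻¹ • v)| ≤ ‖u‖ * ‖v‖ * K := by
          apply mul_le_mul_of_nonneg_left h1 (by positivity)
      _ = K * (‖u‖ * ‖v‖) := by ring
  -- conclude K ≤ 2B
  obtain ⟨u₀, hu₀N, hu₀⟩ := hNucov us hus
  obtain ⟨v₀, hv₀N, hv₀⟩ := hNvcov vs hvs
  have hdecomp : K = bil g u₀ v₀ + bil g (us - u₀) vs + bil g u₀ (vs - v₀) := by
    rw [bil_sub_left, bil_sub_right, hK]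
    ring
  have he1 : bil g (us - u₀) vs ≤ K * (1/4) := by
    calc bil g (us - u₀) vs ≤ |bil g (us - u₀) vs| := le_abs_self _
      _ ≤ K * (‖us - u₀‖ * ‖vs‖) := hgen _ _
      _ ≤ K * (1/4 * 1) := by
          apply mul_le_mul_of_nonneg_left _ hK0
          rw [hvs]
          apply mul_le_mul_of_nonneg_right hu₀ zero_le_one
      _ = K * (1/4) := by ring
  have he2 : bil g u₀ (vs - v₀) ≤ K * (1/4) := by
    have hu₀n : ‖u₀‖ = 1 := hNu1 _ hu₀N
    calc bil g u₀ (vs - v₀) ≤ |bil g u₀ (vs - v₀)| := le_abs_self _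
      _ ≤ K * (‖u₀‖ * ‖vs - v₀‖) := hgen _ _
      _ ≤ K * (1 * (1/4)) := by
          apply mul_le_mul_of_nonneg_left _ hK0
          rw [hu₀n]
          apply mul_le_mul_of_nonneg_left hv₀ zero_le_one
      _ = K * (1/4) := by ring
  have hKB : K ≤ 2 * B := by
    have h0 := hB u₀ hu₀N v₀ hv₀N
    have := hdecomp
    nlinarith
  intro u v hu hv
  exact (hmax' u v hu hv).trans hKB

-- row norm bound from bilinear bound
lemma rowsum_le {n d : ℕ} (g : Fin n → Fin d → ℝ) {B : ℝ} (hB0 : 0 ≤ B)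
    (h : ∀ u v, ‖u‖ = 1 → ‖v‖ = 1 → bil g u v ≤ B)
    (v : EuclideanSpace ℝ (Fin d)) :
    Real.sqrt (∑ i, (∑ j, g i j * v j)^2) ≤ B * ‖v‖ := by
  classical
  rcases eq_or_ne v 0 with rfl | hv0
  · have hz : ∀ i : Fin n, (∑ j, g i j * (0 : EuclideanSpace ℝ (Fin d)) j) = 0 := by
      intro i
      refine Finset.sum_eq_zero fun j _ => ?_
      have : (0 : EuclideanSpace ℝ (Fin d)) j = 0 := rfl
      rw [this, mul_zero]
    simp only [hz]
    simp
  have hvn : (0:ℝ) < ‖v‖ := norm_pos_iff.2 hv0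
  set W : Fin n → ℝ := fun i => ∑ j, g i j * v j with hW
  set s : ℝ := Real.sqrt (∑ i, W i ^ 2) with hs
  have hs0 : 0 ≤ s := Real.sqrt_nonneg _
  rcases eq_or_lt_of_le hs0 with hseq | hspos
  · rw [← hseq]; positivity
  -- unit vectors
  set vh : EuclideanSpace ℝ (Fin d) := ‖v‖⁻¹ • v with hvh
  have hvh1 : ‖vh‖ = 1 := norm_smul_inv_norm hv0
  set u : EuclideanSpace ℝ (Fin n) := WithLp.toLp 2 (fun i => s⁻¹ * W i) with hu
  have hsum_sq : ∑ i, W i ^ 2 = s ^ 2 := by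
    rw [hs, Real.sq_sqrt]
    positivity
  have hu1 : ‖u‖ = 1 := by
    rw [EuclideanSpace.norm_eq]
    have : ∀ i : Fin n, ‖u i‖ ^ 2 = s⁻¹ ^ 2 * W i ^ 2 := by
      intro i
      rw [hu]
      simp only [PiLp.toLp_apply, Real.norm_eq_abs, sq_abs]
      ring
    rw [Finset.sum_congr rfl fun i _ => this i, ← Finset.mul_sum, hsum_sq]
    rw [Real.sqrt_eq_one]
    field_simp
  have hbil : bil g u vh = s * ‖v‖⁻¹ := by
    unfold bil
    have : ∀ i : Fin n, ∑ j, u i * g i j * vh j = s⁻¹ * ‖v‖⁻¹ * (W i * W i) := by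
      intro i
      have hvhj : ∀ j, vh j = ‖v‖⁻¹ * v j := fun j => rfl
      have huI : u i = s⁻¹ * W i := rfl
      calc ∑ j, u i * g i j * vh j = ∑ j, (s⁻¹ * ‖v‖⁻¹ * W i) * (g i j * v j) := by
            refine Finset.sum_congr rfl fun j _ => ?_
            rw [hvhj j, huI]; ring
        _ = (s⁻¹ * ‖v‖⁻¹ * W i) * W i := by rw [← Finset.mul_sum]
        _ = s⁻¹ * ‖v‖⁻¹ * (W i * W i) := by ring
    rw [Finset.sum_congr rfl fun i _ => this i, ← Finset.mul_sum]
    have : ∑ i, W i * W i = s ^ 2 := by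
      rw [← hsum_sq]
      exact Finset.sum_congr rfl fun i _ => (sq (W i)).symm ▸ by ring
    rw [this]
    field_simp
  have hle := h u vh hu1 hvh1
  rw [hbil] at hle
  calc s = (s * ‖v‖⁻¹) * ‖v‖ := by field_simp
    _ ≤ B * ‖v‖ := by
        apply mul_le_mul_of_nonneg_right hle (le_of_lt hvn)

lemma matOpNorm_outer_le {n d : ℕ} (hn : 0 < n) (g : Fin n → EuclideanSpace ℝ (Fin d))
    {B : ℝ} (hB0 : 0 ≤ B)
    (h : ∀ u v, ‖u‖ = 1 → ‖v‖ = 1 → bil (fun i j => g i j) u v ≤ B) :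
    matOpNorm ((n:ℝ)⁻¹ • ∑ i, outerProd (g i)) ≤ B^2 / n := by
  classical
  set M : Matrix (Fin d) (Fin d) ℝ := (n:ℝ)⁻¹ • ∑ i, outerProd (g i) with hM
  have hnR : (0:ℝ) < n := by exact_mod_cast hn
  unfold matOpNorm
  apply ContinuousLinearMap.opNorm_le_bound _ (by positivity)
  intro v
  set z : EuclideanSpace ℝ (Fin d) := Matrix.toEuclideanLin M v with hz
  have hzc : ∀ k : Fin d, z k = (n:ℝ)⁻¹ * ∑ i, g i k * (∑ l, g i l * v l) := by
    intro k
    have h1 : z k = ∑ l, M k l * v l := by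
      rw [hz, Matrix.toEuclideanLin_apply]
      rfl
    rw [h1]
    have hMkl : ∀ k l, M k l = (n:ℝ)⁻¹ * ∑ i, g i k * g i l := by
      intro k l
      rw [hM]
      simp [outerProd, Matrix.sum_apply]
    calc ∑ l, M k l * v l = ∑ l, (n:ℝ)⁻¹ * ∑ i, (g i k * g i l) * v l := by
          refine Finset.sum_congr rfl fun l _ => ?_
          rw [hMkl k l, mul_assoc, Finset.sum_mul]
      _ = (n:ℝ)⁻¹ * ∑ l, ∑ i, g i k * g i l * v l := by rw [Finset.mul_sum]
      _ = (n:ℝ)⁻¹ * ∑ i, ∑ l, g i k * g i l * v l := by rw [Finset.sum_comm]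
      _ = (n:ℝ)⁻¹ * ∑ i, g i k * (∑ l, g i l * v l) := by
          congr 1
          refine Finset.sum_congr rfl fun i _ => ?_
          rw [Finset.mul_sum]
          refine Finset.sum_congr rfl fun l _ => by ring
  show ‖z‖ ≤ B ^ 2 / n * ‖v‖
  set W : Fin n → ℝ := fun i => ∑ l, g i l * v l with hWdef
  set W' : Fin n → ℝ := fun i => ∑ k, g i k * z k with hW'def
  have hnormz : ‖z‖ ^ 2 = ∑ k, z k ^ 2 := by
    rw [EuclideanSpace.norm_eq, Real.sq_sqrt (by positivity)]
    refine Finset.sum_congr rfl fun k _ => ?_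
    rw [Real.norm_eq_abs, sq_abs]
  have hkey : ‖z‖ ^ 2 = (n:ℝ)⁻¹ * ∑ i, W i * W' i := by
    rw [hnormz]
    calc ∑ k, z k ^ 2 = ∑ k, ((n:ℝ)⁻¹ * ∑ i, g i k * W i) * z k := by
          refine Finset.sum_congr rfl fun k _ => ?_
          rw [← hzc k]; ring
      _ = (n:ℝ)⁻¹ * ∑ k, ∑ i, (g i k * W i) * z k := by
          rw [Finset.mul_sum]
          refine Finset.sum_congr rfl fun k _ => ?_
          rw [mul_assoc, Finset.sum_mul]
      _ = (n:ℝ)⁻¹ * ∑ i, ∑ k, (g i k * W i) * z k := by rw [Finset.sum_comm]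
      _ = (n:ℝ)⁻¹ * ∑ i, W i * W' i := by
          congr 1
          refine Finset.sum_congr rfl fun i _ => ?_
          rw [hW'def, Finset.mul_sum]
          refine Finset.sum_congr rfl fun k _ => by ring
  have hCS : ∑ i, W i * W' i ≤
      Real.sqrt (∑ i, W i ^ 2) * Real.sqrt (∑ i, W' i ^ 2) := by
    have h2 := Finset.sum_mul_sq_le_sq_mul_sq Finset.univ W W'
    calc ∑ i, W i * W' i ≤ |∑ i, W i * W' i| := le_abs_self _
      _ = Real.sqrt ((∑ i, W i * W' i)^2) := (Real.sqrt_sq_eq_abs _).symm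
      _ ≤ Real.sqrt ((∑ i, W i ^ 2) * (∑ i, W' i ^ 2)) := Real.sqrt_le_sqrt h2
      _ = Real.sqrt (∑ i, W i ^ 2) * Real.sqrt (∑ i, W' i ^ 2) := by
          rw [Real.sqrt_mul (by positivity)]
  have hrv := rowsum_le (fun i j => g i j) hB0 h v
  have hrz := rowsum_le (fun i j => g i j) hB0 h z
  have hbound : ‖z‖ ^ 2 ≤ (n:ℝ)⁻¹ * (B * ‖v‖ * (B * ‖z‖)) := by
    rw [hkey]
    apply mul_le_mul_of_nonneg_left _ (by positivity)
    calc ∑ i, W i * W' i ≤ Real.sqrt (∑ i, W i ^ 2) * Real.sqrt (∑ i, W' i ^ 2) := hCS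
      _ ≤ (B * ‖v‖) * (B * ‖z‖) := by
          apply mul_le_mul hrv hrz (Real.sqrt_nonneg _) (by positivity)
  rcases eq_or_lt_of_le (norm_nonneg z) with hz0 | hz0
  · rw [← hz0]; positivity
  · have h2 : ‖z‖ * ‖z‖ ≤ (B^2/(n:ℝ) * ‖v‖) * ‖z‖ := by
      calc ‖z‖ * ‖z‖ = ‖z‖ ^ 2 := (sq ‖z‖).symm
        _ ≤ (n:ℝ)⁻¹ * (B * ‖v‖ * (B * ‖z‖)) := hbound
        _ = (B^2/(n:ℝ) * ‖v‖) * ‖z‖ := by field_simp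
    exact le_of_mul_le_mul_right h2 hz0
-- ===== auxiliary probabilistic lemmas =====

lemma measurable_sign' : Measurable Real.sign := by
  have h : Real.sign = fun r : ℝ => if r < 0 then (-1:ℝ) else if 0 < r then 1 else 0 := by
    funext r; rfl
  rw [h]
  exact Measurable.ite (measurableSet_lt measurable_id measurable_const) measurable_const
    (Measurable.ite (measurableSet_lt measurable_const measurable_id) measurable_const
      measurable_const)

lemma abs_sign_le (t : ℝ) : |Real.sign t| ≤ 1 := by
  rcases Real.sign_apply_eq t with h | h | h <;> rw [h] <;> norm_num

lemma real_sign_mul_abs (t : ℝ) : Real.sign t * |t| = t := by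
  rcases lt_trichotomy t 0 with h | h | h
  · rw [Real.sign_of_neg h, abs_of_neg h]; ring
  · simp [h]
  · rw [Real.sign_of_pos h, abs_of_pos h]; ring

lemma clip_eq_sign_mul {h : ℝ} (t : ℝ) : clip h t = Real.sign t * min |t| h := by
  unfold clip
  rcases le_or_gt |t| h with hc | hc
  · rw [if_pos hc, min_eq_left hc, real_sign_mul_abs]
  · rw [if_neg (not_le.2 hc), min_eq_right hc.le]; ring

lemma abs_clip_le {h : ℝ} (hh : 0 ≤ h) (t : ℝ) : |clip h t| ≤ h := by
  rw [clip_eq_sign_mul, abs_mul]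
  have h1 : |min |t| h| ≤ h := by
    rw [abs_of_nonneg (le_min (abs_nonneg t) hh)]
    exact min_le_right _ _
  calc |Real.sign t| * |min |t| h| ≤ 1 * h :=
        mul_le_mul (abs_sign_le t) h1 (abs_nonneg _) one_pos.le
    _ = h := one_mul h

lemma clip_one_sign (t : ℝ) : clip 1 (Real.sign t) = Real.sign t := by
  unfold clip; rw [if_pos (abs_sign_le t)]

lemma measurable_clip (h : ℝ) : Measurable (clip h) := by
  unfold clip
  exact Measurable.ite (measurableSet_le measurable_id.abs measurable_const)
    measurable_id (measurable_const.mul measurable_sign')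

/-- product of independent real random variables: expectation factorizes -/
lemma iIndep_integral_prod {Ω : Type*} [MeasurableSpace Ω] {P : Measure Ω}
    [IsProbabilityMeasure P] {ι : Type*} (f : ι → Ω → ℝ)
    (hind : iIndepFun f P) (hmeas : ∀ i, Measurable (f i))
    (s : Finset ι) : ∫ ω, ∏ i ∈ s, f i ω ∂P = ∏ i ∈ s, ∫ ω, f i ω ∂P := by
  classical
  induction s using Finset.induction_on with
  | empty => simp
  | @insert i s hi ih =>
    have hEq : (∏ j ∈ s, f j) = fun ω => ∏ j ∈ s, f j ω :=
      funext fun ω => Finset.prod_apply ω s f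
    have hIF : IndepFun (f i) (fun ω => ∏ j ∈ s, f j ω) P := by
      rw [← hEq]
      exact (hind.indepFun_finset_prod_of_notMem hmeas hi).symm
    have hm2 : AEStronglyMeasurable (fun ω => ∏ j ∈ s, f j ω) P :=
      (Finset.measurable_prod s fun j _ => hmeas j).aestronglyMeasurable
    calc ∫ ω, ∏ j ∈ insert i s, f j ω ∂P
        = ∫ ω, f i ω * ∏ j ∈ s, f j ω ∂P := by
          refine integral_congr_ae (Filter.Eventually.of_forall fun ω => ?_)
          exact Finset.prod_insert hi
      _ = (∫ ω, f i ω ∂P) * ∫ ω, ∏ j ∈ s, f j ω ∂P :=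
          hIF.integral_fun_mul_eq_mul_integral (hmeas i).aestronglyMeasurable hm2
      _ = ∏ j ∈ insert i s, ∫ ω, f j ω ∂P := by
          rw [ih, Finset.prod_insert hi]

/-- symmetric bounded-by-one variable: mgf bound -/
lemma sign_mgf_bound {Ω : Type*} [MeasurableSpace Ω] {P : Measure Ω} [IsProbabilityMeasure P]
    {S : Ω → ℝ} (hmeas : Measurable S) (hbd : ∀ ω, |S ω| ≤ 1)
    (hsymm : IdentDistrib S (fun ω => -S ω) P P) (c : ℝ) :
    ∫ ω, Real.exp (c * S ω) ∂P ≤ Real.exp (c ^ 2 / 2) := by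
  have hint : ∀ c' : ℝ, Integrable (fun ω => Real.exp (c' * S ω)) P := by
    intro c'
    refine Integrable.mono' (integrable_const (Real.exp |c'|))
      ((hmeas.const_mul c').exp.aestronglyMeasurable)
      (Filter.Eventually.of_forall fun ω => ?_)
    rw [Real.norm_eq_abs, Real.abs_exp]
    apply Real.exp_le_exp.2
    calc c' * S ω ≤ |c' * S ω| := le_abs_self _
      _ = |c'| * |S ω| := abs_mul _ _
      _ ≤ |c'| * 1 := mul_le_mul_of_nonneg_left (hbd ω) (abs_nonneg _)
      _ = |c'| := mul_one _
  have hflip : ∫ ω, Real.exp (c * S ω) ∂P = ∫ ω, Real.exp (-(c * S ω)) ∂P := by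
    have h1 : IdentDistrib (fun ω => Real.exp (c * S ω))
        (fun ω => Real.exp (c * (-S ω))) P P :=
      hsymm.comp (measurable_const_mul c).exp
    have := h1.integral_eq
    rw [this]
    refine integral_congr_ae (Filter.Eventually.of_forall fun ω => ?_)
    ring_nf
  have hcosh : ∫ ω, Real.exp (c * S ω) ∂P = ∫ ω, Real.cosh (c * S ω) ∂P := by
    have : ∀ ω, Real.cosh (c * S ω)
        = (Real.exp (c * S ω) + Real.exp (-(c * S ω))) / 2 := fun ω => Real.cosh_eq _
    rw [integral_congr_ae (Filter.Eventually.of_forall fun ω => this ω)]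
    rw [integral_div, integral_add (hint c) ?hneg]
    · rw [← hflip]; ring
    · have := hint (-c)
      refine this.congr (Filter.Eventually.of_forall fun ω => ?_)
      ring_nf
  rw [hcosh]
  calc ∫ ω, Real.cosh (c * S ω) ∂P ≤ ∫ _, Real.cosh c ∂P := by
        refine integral_mono ?_ (integrable_const _) fun ω => ?_
        · -- integrable cosh
          refine Integrable.mono' (integrable_const (Real.cosh c))
            (((hmeas.const_mul c).cosh).aestronglyMeasurable)
            (Filter.Eventually.of_forall fun ω => ?_)
          rw [Real.norm_eq_abs, abs_of_nonneg ((Real.cosh_pos _).le)]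
          apply Real.cosh_le_cosh.2
          calc |c * S ω| = |c| * |S ω| := abs_mul _ _
            _ ≤ |c| * 1 := mul_le_mul_of_nonneg_left (hbd ω) (abs_nonneg _)
            _ = |c| := mul_one _
        · apply Real.cosh_le_cosh.2
          calc |c * S ω| = |c| * |S ω| := abs_mul _ _
            _ ≤ |c| * 1 := mul_le_mul_of_nonneg_left (hbd ω) (abs_nonneg _)
            _ = |c| := mul_one _
      _ = Real.cosh c := by
        rw [integral_const, probReal_univ, one_smul]
      _ ≤ Real.exp (c ^ 2 / 2) := Real.cosh_le_exp_half_sq c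

/-- Master mgf bound for a single semi-product vector. -/
lemma semiproduct_mgf {Ω : Type*} [MeasurableSpace Ω] {P : Measure Ω} [IsProbabilityMeasure P]
    {d : ℕ} {α ρ : ℝ} {X : Ω → EuclideanSpace ℝ (Fin d)} (hX : IsSemiProduct P α ρ X)
    {h : ℝ} (hh : 0 < h) (t : Fin d → ℝ) :
    ∫ ω, Real.exp (∑ j, t j * clip h (X ω j)) ∂P ≤ Real.exp ((∑ j, (t j)^2) * h^2 / 2) := by
  classical
  set σ : Ω → (Fin d → ℝ) := fun ω j => Real.sign (X ω j) with hσdef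
  set a : Ω → (Fin d → ℝ) := fun ω j => |X ω j| with hadef
  have hXj : ∀ j : Fin d, Measurable (fun ω => X ω j) :=
    fun j => ((measurable_pi_apply j).comp (WithLp.measurable_ofLp 2 _)).comp hX.meas
  have hσmeas : Measurable σ :=
    measurable_pi_lambda _ fun j => measurable_sign'.comp (hXj j)
  have hameas : Measurable a :=
    measurable_pi_lambda _ fun j => (hXj j).abs
  -- the bounded kernel function on the product space
  set G : (Fin d → ℝ) × (Fin d → ℝ) → ℝ :=
    fun p => Real.exp (∑ j, (t j * min |p.1 j| h) * clip 1 (p.2 j)) with hGdef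
  have hGmeas : Measurable G := by
    apply Measurable.exp
    apply Finset.measurable_sum
    intro j _
    have h1 : Measurable fun p : (Fin d → ℝ) × (Fin d → ℝ) => p.1 j :=
      (measurable_pi_apply j).comp measurable_fst
    have h2 : Measurable fun p : (Fin d → ℝ) × (Fin d → ℝ) => p.2 j :=
      (measurable_pi_apply j).comp measurable_snd
    exact ((h1.abs.min measurable_const).const_mul (t j)).mul
      ((measurable_clip 1).comp h2)
  set B₀ : ℝ := Real.exp (∑ j, |t j| * h) with hB₀def
  have hGbd : ∀ p, ‖G p‖ ≤ B₀ := by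
    intro p
    rw [hGdef, Real.norm_eq_abs, Real.abs_exp, hB₀def]
    apply Real.exp_le_exp.2
    apply Finset.sum_le_sum
    intro j _
    calc (t j * min |p.1 j| h) * clip 1 (p.2 j)
        ≤ |(t j * min |p.1 j| h) * clip 1 (p.2 j)| := le_abs_self _
      _ = |t j| * |min |p.1 j| h| * |clip 1 (p.2 j)| := by rw [abs_mul, abs_mul]
      _ ≤ |t j| * h * 1 := by
          apply mul_le_mul _ (abs_clip_le zero_le_one _) (abs_nonneg _) (by positivity)
          apply mul_le_mul_of_nonneg_left _ (abs_nonneg _)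
          rw [abs_of_nonneg (le_min (abs_nonneg _) hh.le)]
          exact min_le_right _ _
      _ = |t j| * h := mul_one _
  -- pointwise identity
  have hpt : ∀ ω, Real.exp (∑ j, t j * clip h (X ω j)) = G (a ω, σ ω) := by
    intro ω
    have hGr : G (a ω, σ ω)
        = Real.exp (∑ j, (t j * min |(a ω) j| h) * clip 1 (Real.sign (X ω j))) := rfl
    rw [hGr]
    congr 1
    refine Finset.sum_congr rfl fun j _ => ?_
    have h1 : clip 1 (σ ω j) = Real.sign (X ω j) := clip_one_sign _
    have h2 : |a ω j| = |X ω j| := abs_abs _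
    rw [h1, h2, clip_eq_sign_mul]
    ring
  -- independence: joint law is a product
  have hindep : IndepFun a σ P := hX.indep_sign_abs.symm
  have hmap : P.map (fun ω => (a ω, σ ω)) = (P.map a).prod (P.map σ) :=
    (indepFun_iff_map_prod_eq_prod_map_map hameas.aemeasurable hσmeas.aemeasurable).1 hindep
  haveI : IsProbabilityMeasure (P.map a) := Measure.isProbabilityMeasure_map hameas.aemeasurable
  haveI : IsProbabilityMeasure (P.map σ) := Measure.isProbabilityMeasure_map hσmeas.aemeasurable
  have hGint : Integrable G ((P.map a).prod (P.map σ)) :=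
    Integrable.mono' (integrable_const B₀) hGmeas.aestronglyMeasurable
      (Filter.Eventually.of_forall hGbd)
  have hstep1 : ∫ ω, Real.exp (∑ j, t j * clip h (X ω j)) ∂P
      = ∫ p, G p ∂((P.map a).prod (P.map σ)) := by
    rw [← hmap]
    rw [integral_map (hameas.prodMk hσmeas).aemeasurable hGmeas.aestronglyMeasurable]
    exact integral_congr_ae (Filter.Eventually.of_forall hpt)
  rw [hstep1]
  rw [MeasureTheory.integral_prod G hGint]
  -- inner bound for each fixed m
  have hinner : ∀ m : Fin d → ℝ,
      ∫ s, G (m, s) ∂(P.map σ) ≤ Real.exp ((∑ j, (t j)^2) * h^2 / 2) := by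
    intro m
    have hstep2 : ∫ s, G (m, s) ∂(P.map σ)
        = ∫ ω, G (m, σ ω) ∂P := by
      rw [integral_map hσmeas.aemeasurable]
      exact (hGmeas.comp (measurable_const.prodMk measurable_id)).aestronglyMeasurable
    rw [hstep2]
    set c : Fin d → ℝ := fun j => t j * min |m j| h with hcdef
    have hGm : ∀ ω, G (m, σ ω) = ∏ j, Real.exp (c j * Real.sign (X ω j)) := by
      intro ω
      rw [← Real.exp_sum]
      have hGr : G (m, σ ω)
          = Real.exp (∑ j, (t j * min |m j| h) * clip 1 (Real.sign (X ω j))) := rfl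
      rw [hGr]
      congr 1
      refine Finset.sum_congr rfl fun j _ => ?_
      rw [clip_one_sign]
    rw [integral_congr_ae (Filter.Eventually.of_forall hGm)]
    -- factorize by independence of signs
    set f : Fin d → Ω → ℝ := fun j ω => Real.exp (c j * Real.sign (X ω j)) with hfdef
    have hfmeas : ∀ j, Measurable (f j) :=
      fun j => ((measurable_sign'.comp (hXj j)).const_mul (c j)).exp
    have hfind : iIndepFun f P := by
      have := hX.iIndep_sign
      exact this.comp (fun j => fun x : ℝ => Real.exp (c j * x))
        (fun j => (measurable_id.const_mul (c j)).exp)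
    rw [iIndep_integral_prod f hfind hfmeas Finset.univ]
    -- per-coordinate bound
    have hfj : ∀ j : Fin d, ∫ ω, f j ω ∂P ≤ Real.exp ((t j)^2 * h^2 / 2) := by
      intro j
      have hsymm : IdentDistrib (fun ω => Real.sign (X ω j))
          (fun ω => -(Real.sign (X ω j))) P P := by
        have h1 := (hX.symm j).comp measurable_sign'
        have h2 : Real.sign ∘ (fun ω => -(X ω j)) = fun ω => -(Real.sign (X ω j)) := by
          funext ω; exact Real.sign_neg
        rw [h2] at h1
        exact h1
      have hbd1 : ∀ ω, |Real.sign (X ω j)| ≤ 1 := fun ω => abs_sign_le _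
      have := sign_mgf_bound (measurable_sign'.comp (hXj j)) hbd1 hsymm (c j)
      refine this.trans (Real.exp_le_exp.2 ?_)
      have hc2 : (c j)^2 ≤ (t j)^2 * h^2 := by
        rw [hcdef]
        have hmin : |min |m j| h| ≤ h := by
          rw [abs_of_nonneg (le_min (abs_nonneg _) hh.le)]
          exact min_le_right _ _
        calc (t j * min |m j| h)^2 = (t j)^2 * (min |m j| h)^2 := by ring
          _ ≤ (t j)^2 * h^2 := by
              apply mul_le_mul_of_nonneg_left _ (sq_nonneg _)
              rw [← sq_abs (min |m j| h)]
              exact pow_le_pow_left₀ (abs_nonneg _) hmin 2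
      linarith
    calc ∏ j, ∫ ω, f j ω ∂P ≤ ∏ j, Real.exp ((t j)^2 * h^2 / 2) := by
          apply Finset.prod_le_prod
          · intro j _
            apply integral_nonneg
            intro ω
            exact (Real.exp_pos _).le
          · intro j _; exact hfj j
      _ = Real.exp (∑ j, (t j)^2 * h^2 / 2) := (Real.exp_sum _ _).symm
      _ = Real.exp ((∑ j, (t j)^2) * h^2 / 2) := by
          congr 1
          rw [Finset.sum_mul, Finset.sum_div]
  -- outer integral
  calc ∫ m, ∫ s, G (m, s) ∂(P.map σ) ∂(P.map a)
      ≤ ∫ _, Real.exp ((∑ j, (t j)^2) * h^2 / 2) ∂(P.map a) := by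
        refine integral_mono hGint.integral_prod_left (integrable_const _) fun m => hinner m
    _ = Real.exp ((∑ j, (t j)^2) * h^2 / 2) := by
        rw [integral_const, probReal_univ, one_smul]

/-- Per-pair Chernoff bound. -/
lemma pair_prob {Ω : Type*} [MeasurableSpace Ω] {P : Measure Ω} [IsProbabilityMeasure P]
    {d n : ℕ} {α ρ : ℝ} (hρ : 0 < ρ)
    {η : Fin n → Ω → EuclideanSpace ℝ (Fin d)}
    (hind : iIndepFun η P)
    (hsp : ∀ i, IsSemiProduct P α ρ (η i))
    (u : EuclideanSpace ℝ (Fin n)) (v : EuclideanSpace ℝ (Fin d))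
    (hu : ‖u‖ = 1) (hv : ‖v‖ = 1) :
    P {ω | 8*ρ*Real.sqrt n ≤ ∑ i, ∑ j, u i * clip (2*ρ) (η i ω j) * v j}
      ≤ ENNReal.ofReal (Real.exp (-(8*(n:ℝ)))) := by
  classical
  have hh : (0:ℝ) < 2*ρ := by positivity
  set Z : Fin n → Ω → ℝ := fun i ω => ∑ j, u i * clip (2*ρ) (η i ω j) * v j with hZdef
  have hηj : ∀ (i : Fin n) (j : Fin d), Measurable (fun ω => η i ω j) :=
    fun i j => ((measurable_pi_apply j).comp (WithLp.measurable_ofLp 2 _)).comp (hsp i).meas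
  have hZmeas : ∀ i, Measurable (Z i) := by
    intro i
    apply Finset.measurable_sum
    intro j _
    exact (((measurable_clip (2*ρ)).comp (hηj i j)).const_mul (u i)).mul_const (v j)
  have hZind : iIndepFun Z P := by
    have := hind.comp (fun i (x : EuclideanSpace ℝ (Fin d)) => ∑ j, u i * clip (2*ρ) (x j) * v j)
      (fun i => by
        apply Finset.measurable_sum
        intro j _
        exact (((measurable_clip (2*ρ)).comp ((measurable_pi_apply j).comp (WithLp.measurable_ofLp 2 _))).const_mul (u i)).mul_const
          (v j))
    exact this
  set Sfun : Ω → ℝ := fun ω => ∑ i, Z i ω with hSdef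
  have hSmeas : Measurable Sfun := Finset.measurable_sum _ fun i _ => hZmeas i
  set C₀ : ℝ := ∑ i, ∑ j, |u i| * (2*ρ) * |v j| with hC₀def
  have hSbd : ∀ ω, Sfun ω ≤ C₀ := by
    intro ω
    apply Finset.sum_le_sum
    intro i _
    apply Finset.sum_le_sum
    intro j _
    calc u i * clip (2*ρ) (η i ω j) * v j ≤ |u i * clip (2*ρ) (η i ω j) * v j| := le_abs_self _
      _ = |u i| * |clip (2*ρ) (η i ω j)| * |v j| := by rw [abs_mul, abs_mul]
      _ ≤ |u i| * (2*ρ) * |v j| := by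
          apply mul_le_mul_of_nonneg_right _ (abs_nonneg _)
          exact mul_le_mul_of_nonneg_left (abs_clip_le hh.le _) (abs_nonneg _)
  set s : ℝ := 2 * Real.sqrt n / ρ with hsdef
  have hs0 : 0 ≤ s := by positivity
  have hint : Integrable (fun ω => Real.exp (s * Sfun ω)) P := by
    refine Integrable.mono' (integrable_const (Real.exp (s * C₀)))
      ((hSmeas.const_mul s).exp.aestronglyMeasurable)
      (Filter.Eventually.of_forall fun ω => ?_)
    rw [Real.norm_eq_abs, Real.abs_exp]
    exact Real.exp_le_exp.2 (mul_le_mul_of_nonneg_left (hSbd ω) hs0)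
  -- norms to sums of squares
  have hsum_u : ∑ i, (u i)^2 = 1 := by
    have h1 : ‖u‖^2 = 1 := by rw [hu]; norm_num
    rw [EuclideanSpace.norm_eq, Real.sq_sqrt (by positivity)] at h1
    rw [← h1]
    exact Finset.sum_congr rfl fun i _ => by rw [Real.norm_eq_abs, sq_abs]
  have hsum_v : ∑ j, (v j)^2 = 1 := by
    have h1 : ‖v‖^2 = 1 := by rw [hv]; norm_num
    rw [EuclideanSpace.norm_eq, Real.sq_sqrt (by positivity)] at h1
    rw [← h1]
    exact Finset.sum_congr rfl fun j _ => by rw [Real.norm_eq_abs, sq_abs]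
  -- mgf bound
  have hmgfZ : ∀ i, mgf (Z i) P s ≤ Real.exp (s^2 * (u i)^2 * (2*ρ)^2 / 2) := by
    intro i
    have hrw : ∀ ω, Real.exp (s * Z i ω)
        = Real.exp (∑ j, (s * u i * v j) * clip (2*ρ) (η i ω j)) := by
      intro ω
      congr 1
      rw [hZdef, Finset.mul_sum]
      exact Finset.sum_congr rfl fun j _ => by ring
    have hmg := semiproduct_mgf (hsp i) hh (fun j => s * u i * v j)
    have hexp_eq : (∑ j, (s * u i * v j)^2) = s^2 * (u i)^2 := by
      calc ∑ j, (s * u i * v j)^2 = ∑ j, (s^2 * (u i)^2) * (v j)^2 :=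
            Finset.sum_congr rfl fun j _ => by ring
        _ = (s^2 * (u i)^2) * ∑ j, (v j)^2 := by rw [← Finset.mul_sum]
        _ = s^2 * (u i)^2 := by rw [hsum_v, mul_one]
    calc mgf (Z i) P s = ∫ ω, Real.exp (∑ j, (s * u i * v j) * clip (2*ρ) (η i ω j)) ∂P := by
          unfold mgf
          exact integral_congr_ae (Filter.Eventually.of_forall hrw)
      _ ≤ Real.exp ((∑ j, (s * u i * v j)^2) * (2*ρ)^2 / 2) := hmg
      _ = Real.exp (s^2 * (u i)^2 * (2*ρ)^2 / 2) := by rw [hexp_eq]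
  have hmgfS : mgf Sfun P s ≤ Real.exp (s^2 * (2*ρ)^2 / 2) := by
    have hfun : Sfun = ∑ i, Z i := by
      funext ω
      rw [hSdef, Finset.sum_apply]
    rw [hfun, hZind.mgf_sum hZmeas Finset.univ]
    calc ∏ i, mgf (Z i) P s ≤ ∏ i, Real.exp (s^2 * (u i)^2 * (2*ρ)^2 / 2) :=
          Finset.prod_le_prod (fun i _ => mgf_nonneg) (fun i _ => hmgfZ i)
      _ = Real.exp (∑ i, s^2 * (u i)^2 * (2*ρ)^2 / 2) := (Real.exp_sum _ _).symm
      _ = Real.exp (s^2 * (2*ρ)^2 / 2) := by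
          congr 1
          calc ∑ i, s^2 * (u i)^2 * (2*ρ)^2 / 2
              = ∑ i, (s^2 * (2*ρ)^2 / 2) * (u i)^2 :=
                Finset.sum_congr rfl fun i _ => by ring
            _ = (s^2 * (2*ρ)^2 / 2) * ∑ i, (u i)^2 := by rw [← Finset.mul_sum]
            _ = s^2 * (2*ρ)^2 / 2 := by rw [hsum_u, mul_one]
  -- Chernoff
  have hch := measure_ge_le_exp_mul_mgf (μ := P) (X := Sfun) (8*ρ*Real.sqrt n) hs0 hint
  have hq : (Real.sqrt (n:ℝ))^2 = (n:ℝ) := Real.sq_sqrt (Nat.cast_nonneg n)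
  have harith : Real.exp (-s * (8*ρ*Real.sqrt n)) * Real.exp (s^2 * (2*ρ)^2 / 2)
      = Real.exp (-(8*(n:ℝ))) := by
    rw [← Real.exp_add]
    congr 1
    rw [hsdef]
    field_simp
    linear_combination (-8 : ℝ) * hq
  have hfinal : (P {ω | 8*ρ*Real.sqrt n ≤ Sfun ω}).toReal ≤ Real.exp (-(8*(n:ℝ))) := by
    calc (P {ω | 8*ρ*Real.sqrt n ≤ Sfun ω}).toReal
        ≤ Real.exp (-s * (8*ρ*Real.sqrt n)) * mgf Sfun P s := hch
      _ ≤ Real.exp (-s * (8*ρ*Real.sqrt n)) * Real.exp (s^2 * (2*ρ)^2 / 2) :=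
          mul_le_mul_of_nonneg_left hmgfS (Real.exp_pos _).le
      _ = Real.exp (-(8*(n:ℝ))) := harith
  calc P {ω | 8*ρ*Real.sqrt n ≤ ∑ i, ∑ j, u i * clip (2*ρ) (η i ω j) * v j}
      = ENNReal.ofReal (P {ω | 8*ρ*Real.sqrt n ≤ Sfun ω}).toReal :=
        (ENNReal.ofReal_toReal (measure_ne_top P _)).symm
    _ ≤ ENNReal.ofReal (Real.exp (-(8*(n:ℝ)))) := ENNReal.ofReal_le_ofReal hfinal


/-- operator-norm bound on the empirical covariance of the
clipped semi-product noise. -/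
theorem clipped_covariance_semiProduct :
    ∃ C : ℝ, 0 < C ∧
      ∀ (d n : ℕ) (Ω : Type) (_ : MeasurableSpace Ω) (P : Measure Ω),
        IsProbabilityMeasure P →
      ∀ (α ρ δ : ℝ), 0 < α → 0 < ρ → δ ∈ Set.Ioo (0 : ℝ) 1 →
        (d : ℝ) + Real.log (1 / δ) ≤ n →
      ∀ η : Fin n → Ω → EuclideanSpace ℝ (Fin d),
        IsIIDSemiProduct P α ρ η →
        ENNReal.ofReal (1 - δ) ≤
          P {ω | matOpNorm ((n : ℝ)⁻¹ • ∑ i, outerProd (clipVec (2 * ρ) (η i ω))) ≤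
            C * ρ ^ 2} := by
  classical
  refine ⟨256, by norm_num, ?_⟩
  intro d n Ω mΩ P hP α ρ δ hα hρ hδ hn η hiid
  obtain ⟨hind, hsp, hidd⟩ := hiid
  have hδ0 : 0 < δ := hδ.1
  have hδ1 : δ < 1 := hδ.2
  have hlog : 0 < Real.log (1/δ) := Real.log_pos (by rw [lt_div_iff₀ hδ0]; linarith)
  have hdn : (d:ℝ) ≤ n := by linarith
  have hdn' : d ≤ n := by exact_mod_cast hdn
  have hn0R : (0:ℝ) < n :=
    lt_of_lt_of_le (by linarith [(Nat.cast_nonneg d : (0:ℝ) ≤ d)] : (0:ℝ) < (d:ℝ) + Real.log (1/δ)) hn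
  have hn0 : 0 < n := by exact_mod_cast hn0R
  rcases Nat.eq_zero_or_pos d with hd0 | hd0
  · -- trivial case d = 0
    subst hd0
    have hset : {ω | matOpNorm ((n : ℝ)⁻¹ • ∑ i, outerProd (clipVec (2 * ρ) (η i ω))) ≤
        256 * ρ ^ 2} = Set.univ := by
      apply Set.eq_univ_iff_forall.2
      intro ω
      rw [Set.mem_setOf_eq]
      have hall : matOpNorm ((n : ℝ)⁻¹ • ∑ i, outerProd (clipVec (2 * ρ) (η i ω))) ≤ 0 := by
        unfold matOpNorm
        apply ContinuousLinearMap.opNorm_le_bound _ le_rfl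
        intro v
        have hv : v = 0 := Subsingleton.elim v 0
        rw [hv]
        simp
      exact le_trans hall (by positivity)
    rw [hset, measure_univ]
    exact ENNReal.ofReal_le_one.2 (by linarith)
  -- main case
  obtain ⟨Nu, hNu1, hNucov, hNucard⟩ := exists_net n
  obtain ⟨Nv, hNv1, hNvcov, hNvcard⟩ := exists_net d
  set τ : ℝ := 8*ρ*Real.sqrt n with hτdef
  set bad : Set Ω :=
    ⋃ u ∈ Nu, ⋃ v ∈ Nv, {ω | τ ≤ ∑ i, ∑ j, u i * clip (2*ρ) (η i ω j) * v j} with hbad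
  have hSmeas : ∀ (u : EuclideanSpace ℝ (Fin n)) (v : EuclideanSpace ℝ (Fin d)),
      Measurable (fun ω => ∑ i, ∑ j, u i * clip (2*ρ) (η i ω j) * v j) := by
    intro u v
    apply Finset.measurable_sum
    intro i _
    apply Finset.measurable_sum
    intro j _
    exact (((measurable_clip (2*ρ)).comp
      (((measurable_pi_apply j).comp (WithLp.measurable_ofLp 2 _)).comp (hsp i).meas)).const_mul (u i)).mul_const (v j)
  have hbadmeas : MeasurableSet bad := by
    apply Finset.measurableSet_biUnion
    intro u _
    apply Finset.measurableSet_biUnion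
    intro v _
    exact measurableSet_le measurable_const (hSmeas u v)
  -- probability of the bad event
  have hbadP : P bad ≤ ENNReal.ofReal δ := by
    have hpair : ∀ u ∈ Nu, ∀ v ∈ Nv,
        P {ω | τ ≤ ∑ i, ∑ j, u i * clip (2*ρ) (η i ω j) * v j}
          ≤ ENNReal.ofReal (Real.exp (-(8*(n:ℝ)))) := by
      intro u hu v hv
      exact pair_prob hρ hind hsp u v (hNu1 u hu) (hNv1 v hv)
    have hreal : (Nu.card:ℝ) * ((Nv.card:ℝ) * Real.exp (-(8*(n:ℝ)))) ≤ δ := by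
      have h9 : (Nu.card:ℝ) * (Nv.card:ℝ) ≤ 9^n * 9^d :=
        mul_le_mul hNucard hNvcard (Nat.cast_nonneg _) (by positivity)
      have h9d : (9:ℝ)^d ≤ 9^n := pow_le_pow_right₀ (by norm_num : (1:ℝ) ≤ 9) hdn'
      have h2e : (2:ℝ) ≤ Real.exp 1 := by
        have := Real.add_one_le_exp 1; linarith
      have h81 : (81:ℝ) ≤ Real.exp 7 := by
        calc (81:ℝ) ≤ 2^7 := by norm_num
          _ ≤ (Real.exp 1)^7 := pow_le_pow_left₀ (by norm_num) h2e 7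
          _ = Real.exp 7 := by
              rw [← Real.exp_nat_mul]; norm_num
      have hexpn : (81:ℝ)^n ≤ Real.exp (7*n) := by
        calc (81:ℝ)^n ≤ (Real.exp 7)^n := pow_le_pow_left₀ (by norm_num) h81 n
          _ = Real.exp (7*n) := by rw [← Real.exp_nat_mul, mul_comm]
      have hδexp : Real.exp (-(n:ℝ)) ≤ δ := by
        have h1 : Real.log (1/δ) ≤ (n:ℝ) := by linarith [(Nat.cast_nonneg d : (0:ℝ) ≤ d)]
        have h2 : (1:ℝ)/δ ≤ Real.exp (n:ℝ) := by
          rw [← Real.exp_log (by positivity : (0:ℝ) < 1/δ)]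
          exact Real.exp_le_exp.2 h1
        have h3 : (Real.exp (n:ℝ))⁻¹ ≤ ((1:ℝ)/δ)⁻¹ :=
          inv_anti₀ (by positivity) h2
        rw [Real.exp_neg]
        simpa using h3
      calc (Nu.card:ℝ) * ((Nv.card:ℝ) * Real.exp (-(8*(n:ℝ))))
          = ((Nu.card:ℝ)*(Nv.card:ℝ)) * Real.exp (-(8*(n:ℝ))) := by ring
        _ ≤ (9^n * 9^d) * Real.exp (-(8*(n:ℝ))) :=
            mul_le_mul_of_nonneg_right h9 (Real.exp_pos _).le
        _ ≤ (9^n * 9^n) * Real.exp (-(8*(n:ℝ))) := by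
            apply mul_le_mul_of_nonneg_right _ (Real.exp_pos _).le
            exact mul_le_mul_of_nonneg_left h9d (by positivity)
        _ = 81^n * Real.exp (-(8*(n:ℝ))) := by
            rw [← mul_pow]; norm_num
        _ ≤ Real.exp (7*n) * Real.exp (-(8*(n:ℝ))) :=
            mul_le_mul_of_nonneg_right hexpn (Real.exp_pos _).le
        _ = Real.exp (7*n - 8*n) := by rw [← Real.exp_add]; ring_nf
        _ = Real.exp (-(n:ℝ)) := by congr 1; ring
        _ ≤ δ := hδexp
    calc P bad ≤ ∑ u ∈ Nu, P (⋃ v ∈ Nv,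
          {ω | τ ≤ ∑ i, ∑ j, u i * clip (2*ρ) (η i ω j) * v j}) := by
          rw [hbad]
          exact measure_biUnion_finset_le _ _
      _ ≤ ∑ u ∈ Nu, ∑ v ∈ Nv, P {ω | τ ≤ ∑ i, ∑ j, u i * clip (2*ρ) (η i ω j) * v j} :=
          Finset.sum_le_sum fun u _ => measure_biUnion_finset_le _ _
      _ ≤ ∑ u ∈ Nu, ∑ v ∈ Nv, ENNReal.ofReal (Real.exp (-(8*(n:ℝ)))) :=
          Finset.sum_le_sum fun u hu => Finset.sum_le_sum fun v hv => hpair u hu v hv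
      _ = (Nu.card : ℝ≥0∞) * ((Nv.card : ℝ≥0∞) * ENNReal.ofReal (Real.exp (-(8*(n:ℝ))))) := by
          rw [Finset.sum_const, Finset.sum_const, nsmul_eq_mul, nsmul_eq_mul]
      _ = ENNReal.ofReal ((Nu.card:ℝ) * ((Nv.card:ℝ) * Real.exp (-(8*(n:ℝ))))) := by
          rw [ENNReal.ofReal_mul (Nat.cast_nonneg _), ENNReal.ofReal_mul (Nat.cast_nonneg _),
            ENNReal.ofReal_natCast, ENNReal.ofReal_natCast]
      _ ≤ ENNReal.ofReal δ := ENNReal.ofReal_le_ofReal hreal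
  -- on the complement, the operator norm is controlled
  have hcompl : badᶜ ⊆ {ω | matOpNorm ((n : ℝ)⁻¹ • ∑ i, outerProd (clipVec (2 * ρ) (η i ω))) ≤
      256 * ρ ^ 2} := by
    intro ω hω
    have hω' : ∀ u ∈ Nu, ∀ v ∈ Nv,
        ¬ (τ ≤ ∑ i, ∑ j, u i * clip (2*ρ) (η i ω j) * v j) := by
      intro u hu v hv hle
      exact hω (Set.mem_biUnion hu (Set.mem_biUnion hv hle))
    have hnet : ∀ u ∈ Nu, ∀ v ∈ Nv, bil (fun i j => clip (2*ρ) (η i ω j)) u v ≤ τ := by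
      intro u hu v hv
      exact (not_le.1 (hω' u hu v hv)).le
    have hall := bil_net_bound hn0 hd0 (fun i j => clip (2*ρ) (η i ω j)) Nu Nv
      hNu1 hNucov hNv1 hNvcov hnet
    have hτ0 : 0 ≤ 2*τ := by rw [hτdef]; positivity
    have hop := matOpNorm_outer_le hn0 (fun i => clipVec (2*ρ) (η i ω)) hτ0 hall
    rw [Set.mem_setOf_eq]
    refine le_trans hop (le_of_eq ?_)
    have hq : (Real.sqrt (n:ℝ))^2 = (n:ℝ) := Real.sq_sqrt (Nat.cast_nonneg n)
    rw [hτdef, div_eq_iff (ne_of_gt hn0R)]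
    nlinarith [hq]
  calc ENNReal.ofReal (1-δ)
      = 1 - ENNReal.ofReal δ := by
        rw [ENNReal.ofReal_sub _ hδ0.le, ENNReal.ofReal_one]
    _ ≤ 1 - P bad := tsub_le_tsub_left hbadP 1
    _ = P badᶜ := (prob_compl_eq_one_sub hbadmeas).symm
    _ ≤ P {ω | matOpNorm ((n : ℝ)⁻¹ • ∑ i, outerProd (clipVec (2 * ρ) (η i ω))) ≤
          256 * ρ ^ 2} := measure_mono hcompl

end
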